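/- Let n ≥ 4 and let r be an integer with 2 ≤ r and 2r ≤ n. Then in S_n the conjugate of u_{2r} by v_{2r} satisfies: v_{2r} · u_{2r} · v_{2r}^{-1} = s_1 · s_3 · s_4 · s_5 ··· s_{2r-1}, i.e., it equals s_1 times the product of s_i over i = 3, 4, ..., 2r-1 taken in increasing order. -/
import Mathlib


/- We work in the symmetric group on `Fin n` (representing `{1, ..., n}` via `i ↦ i - 1`).
The paper multiplies permutations left-to-right: `(π₁ · π₂)(i) = π₂(π₁(i))`,
while Mathlib's `*` on `Equiv.Perm` is function composition: `(π₁ * π₂)(i) = π₁(π₂(i))`.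
Hence a paper product `A · B · C` is rendered below as `C * B * A`. -/

/-- `sP n i` is the transposition `sᵢ = (i, i+1)` (1-indexed), for `1 ≤ i ≤ n - 1`. -/
def sP (n i : ℕ) : Equiv.Perm (Fin n) :=
  if h : 1 ≤ i ∧ i < n then
    Equiv.swap ⟨i - 1, lt_of_le_of_lt (Nat.sub_le i 1) h.2⟩ ⟨i, h.2⟩
  else 1

/-- `tP n m` is `t_m = s₁ · s₂ ⋯ s_{m-1}` (paper's left-to-right product, so here the
factor for larger index is multiplied on the left).  `tP n 0 = tP n 1 = 1`. -/
def tP (n m : ℕ) : Equiv.Perm (Fin n) :=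
  (List.range (m - 1)).foldl (fun g j => sP n (j + 1) * g) 1

/-- `uP n r` is `u_{2r} = t_{2r-2} · s_{2r-1}` (paper order; here reversed). -/
def uP (n r : ℕ) : Equiv.Perm (Fin n) := sP n (2 * r - 1) * tP n (2 * r - 2)

/-- `vP n r` is `v_{2r} = t_{2r}²`. -/
def vP (n r : ℕ) : Equiv.Perm (Fin n) := (tP n (2 * r)) ^ 2


/-- `cP n k` abbreviates the right-hand side of the theorem. -/
def cP (n k : ℕ) : Equiv.Perm (Fin n) :=
  (List.range k).foldl (fun acc j => sP n (j + 3) * acc) (sP n 1)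

lemma sP_apply (n i : ℕ) (h1 : 1 ≤ i) (h2 : i < n) (x : Fin n) :
    ((sP n i x : Fin n) : ℕ) = if (x:ℕ) = i - 1 then i else if (x:ℕ) = i then i - 1 else (x:ℕ) := by
  unfold sP
  rw [dif_pos ⟨h1, h2⟩]
  rcases x with ⟨xv, hx⟩
  simp only [Equiv.swap_apply_def, Fin.ext_iff]
  split_ifs <;> simp_all

lemma tP_apply (n : ℕ) : ∀ m, 1 ≤ m → m ≤ n → ∀ x : Fin n,
    ((tP n m x : Fin n) : ℕ) = if (x:ℕ) = 0 then m - 1 else if (x:ℕ) < m then (x:ℕ) - 1 else (x:ℕ) := by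
  intro m
  induction m with
  | zero => omega
  | succ k ih =>
    intro hm hmn x
    rcases Nat.eq_zero_or_pos k with hk | hk
    · subst hk
      show ((1 : Equiv.Perm (Fin n)) x : ℕ) = _
      simp only [Equiv.Perm.one_apply]
      split_ifs <;> omega
    · have step : tP n (k+1) = sP n k * tP n k := by
        obtain ⟨j, rfl⟩ : ∃ j, k = j + 1 := ⟨k - 1, by omega⟩
        unfold tP
        simp [List.range_succ]
      rw [step, Equiv.Perm.mul_apply, sP_apply n k hk (by omega),
        ih hk (by omega)]
      split_ifs <;> omega

lemma cP_apply (n : ℕ) : ∀ k, k + 2 < n → ∀ x : Fin n,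
    ((cP n k x : Fin n) : ℕ) =
      if (x:ℕ) = 0 then 1 else if (x:ℕ) = 1 then 0
      else if (x:ℕ) = 2 ∧ 1 ≤ k then k + 2
      else if 3 ≤ (x:ℕ) ∧ (x:ℕ) ≤ k + 2 then (x:ℕ) - 1 else (x:ℕ) := by
  intro k
  induction k with
  | zero =>
    intro hk x
    show ((sP n 1 x : Fin n) : ℕ) = _
    rw [sP_apply n 1 le_rfl (by omega)]
    split_ifs <;> omega
  | succ k ih =>
    intro hk x
    have step : cP n (k+1) = sP n (k+3) * cP n k := by
      unfold cP
      simp [List.range_succ]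
    rw [step, Equiv.Perm.mul_apply, sP_apply n (k+3) (by omega) (by omega),
      ih (by omega)]
    split_ifs <;> first
      | omega
      | exact absurd ‹False› not_false

lemma vP_apply (n r : ℕ) (hr : 2 ≤ r) (hrn : 2 * r ≤ n) (x : Fin n) :
    ((vP n r x : Fin n) : ℕ) =
      if (x:ℕ) = 0 then 2*r - 2 else if (x:ℕ) = 1 then 2*r - 1
      else if (x:ℕ) < 2*r then (x:ℕ) - 2 else (x:ℕ) := by
  have h : vP n r x = tP n (2*r) (tP n (2*r) x) := by
    simp [vP, pow_succ, Equiv.Perm.mul_apply]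
  rw [h]
  simp only [tP_apply n (2*r) (by omega) hrn]
  split_ifs <;> omega

lemma uP_apply (n r : ℕ) (hr : 2 ≤ r) (hrn : 2 * r ≤ n) (x : Fin n) :
    ((uP n r x : Fin n) : ℕ) =
      if (x:ℕ) = 0 then 2*r - 3 else if (x:ℕ) < 2*r - 2 then (x:ℕ) - 1
      else if (x:ℕ) = 2*r - 2 then 2*r - 1
      else if (x:ℕ) = 2*r - 1 then 2*r - 2 else (x:ℕ) := by
  rw [uP, Equiv.Perm.mul_apply, sP_apply n (2*r-1) (by omega) (by omega)]
  simp only [tP_apply n (2*r-2) (by omega) (by omega)]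
  split_ifs <;> omega

set_option maxHeartbeats 1600000 in

/-- for `2 ≤ r` with `2r ≤ n`,
`v_{2r} · u_{2r} · v_{2r}⁻¹ = s₁ · s₃ · s₄ ⋯ s_{2r-1}` (paper order; rendered here in
composition order, i.e. reversed: the conjugation is `v⁻¹ * u * v` and the right-hand
side is `s_{2r-1} * ⋯ * s₄ * s₃ * s₁`).  The index `j ∈ range (2r-3)` corresponds to
the transposition index `i = j + 3`. -/
theorem conj_u_by_v (n r : ℕ) (hn : 4 ≤ n) (hr : 2 ≤ r) (hrn : 2 * r ≤ n) :
    (vP n r)⁻¹ * uP n r * vP n r =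
      (List.range (2 * r - 3)).foldl (fun acc j => sP n (j + 3) * acc) (sP n 1) := by
  show (vP n r)⁻¹ * uP n r * vP n r = cP n (2 * r - 3)
  have key : uP n r * vP n r = vP n r * cP n (2 * r - 3) := by
    ext x
    have hx := x.isLt
    rw [Equiv.Perm.mul_apply, Equiv.Perm.mul_apply]
    rw [uP_apply n r hr hrn, vP_apply n r hr hrn]
    rw [vP_apply n r hr hrn, cP_apply n (2*r-3) (by omega)]
    split_ifs <;> first
      | omega
      | exact absurd ‹False› not_false
  rw [mul_assoc, key, ← mul_assoc, inv_mul_cancel, one_mul]
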